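/- arXiv:1205.2766 — 4 statements merged into one kernel-verified Lean document; each statement's English description precedes it below -/
import Mathlib

section
/- Let H be a finite simple undirected graph, let x, y be vertices of H, and let p ≠ q be two vertices that both lie on a common simple path from x to y in H. Form H' from H by adding an 'ear': a new path from p to q of length k ≥ 1 all of whose internal vertices are new vertices not in H (if k = 1 the ear is a new edge {p,q} not already in H). Then the number of simple xy-paths in H' is at least one more than the number of simple xy-paths in H. -/
open SimpleGraph

/-- The vertices of an ear with `m` internal (new) vertices attached at `p` and `q`:
`earVert p q m 0 = p`, `earVert p q m (m+1) = q`, and the `m` internal vertices are new. -/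
def earVert {V : Type*} (p q : V) (m : ℕ) : Fin (m + 2) → V ⊕ Fin m := fun i =>
  if h0 : (i : ℕ) = 0 then Sum.inl p
  else if hm : (i : ℕ) = m + 1 then Sum.inl q
  else Sum.inr ⟨(i : ℕ) - 1, by omega⟩

/-- The graph `H'` obtained from `H` by adding an ear from `p` to `q` of length `k = m + 1`
(`k` new edges), whose `m` internal vertices are new vertices not in `H`. -/
def addEar {V : Type*} (H : SimpleGraph V) (p q : V) (m : ℕ) : SimpleGraph (V ⊕ Fin m) :=
  SimpleGraph.fromRel (fun a b =>
    (∃ u v : V, a = Sum.inl u ∧ b = Sum.inl v ∧ H.Adj u v) ∨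
    (∃ i : Fin (m + 1), a = earVert p q m i.castSucc ∧ b = earVert p q m i.succ))

namespace EarProof

variable {V : Type*} {p q : V} {m : ℕ}

lemma earVert_injective (hpq : p ≠ q) : Function.Injective (earVert p q m) := by
  intro i j hij
  have hi := i.isLt
  have hj := j.isLt
  unfold earVert at hij
  apply Fin.ext
  split_ifs at hij <;> simp_all <;> omega

lemma earVert_adj (H : SimpleGraph V) (hpq : p ≠ q) (i : Fin (m + 1)) :
    (addEar H p q m).Adj (earVert p q m i.castSucc) (earVert p q m i.succ) := by
  rw [addEar, fromRel_adj]
  refine ⟨fun h => ?_, Or.inl (Or.inr ⟨i, rfl, rfl⟩)⟩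
  have h2 := congrArg Fin.val (earVert_injective hpq h)
  simp [Fin.val_succ] at h2

/-- The canonical embedding of `H` into `addEar H p q m`. -/
def earHom (H : SimpleGraph V) (p q : V) (m : ℕ) : H →g addEar H p q m where
  toFun := Sum.inl
  map_rel' := fun {u v} h => by
    rw [addEar, fromRel_adj]
    exact ⟨by simp [h.ne], Or.inl (Or.inl ⟨u, v, rfl, rfl, h⟩)⟩

lemma earHom_injective (H : SimpleGraph V) : Function.Injective (earHom H p q m) :=
  fun _ _ h => Sum.inl_injective h

/-- The walk along the ear, from `earVert ⟨j, hj⟩` to `Sum.inl q`. -/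
def earWalkAux (H : SimpleGraph V) (p q : V) (m : ℕ) (hpq : p ≠ q) :
    ∀ (j : ℕ) (hj : j < m + 2), (addEar H p q m).Walk (earVert p q m ⟨j, hj⟩) (Sum.inl q)
  | j, hj =>
    if h : j = m + 1 then
      Walk.nil.copy (show Sum.inl q = earVert p q m ⟨j, hj⟩ by simp [earVert, h]) rfl
    else
      Walk.cons (earVert_adj H hpq ⟨j, by omega⟩) (earWalkAux H p q m hpq (j + 1) (by omega))
  termination_by j _ => m + 1 - j

lemma earWalkAux_support (H : SimpleGraph V) (hpq : p ≠ q) :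
    ∀ (j : ℕ) (hj : j < m + 2), ∀ v ∈ (earWalkAux H p q m hpq j hj).support,
      ∃ (t : ℕ) (ht : t < m + 2), j ≤ t ∧ v = earVert p q m ⟨t, ht⟩
  | j, hj => by
    intro v hv
    rw [earWalkAux] at hv
    split_ifs at hv with h
    · rw [Walk.support_copy, Walk.support_nil] at hv
      simp only [List.mem_singleton] at hv
      exact ⟨j, hj, le_refl j, by simp [earVert, h, hv]⟩
    · rw [Walk.support_cons] at hv
      rcases List.mem_cons.mp hv with h1 | h2
      · exact ⟨j, hj, le_refl j, by simpa using h1⟩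
      · obtain ⟨t, ht, hle, rfl⟩ := earWalkAux_support H hpq (j + 1) (by omega) v h2
        exact ⟨t, ht, by omega, rfl⟩
  termination_by j _ => m + 1 - j

lemma earWalkAux_isPath (H : SimpleGraph V) (hpq : p ≠ q) :
    ∀ (j : ℕ) (hj : j < m + 2), (earWalkAux H p q m hpq j hj).IsPath
  | j, hj => by
    rw [earWalkAux]
    split_ifs with h
    · simp
    · refine (earWalkAux_isPath H hpq (j + 1) (by omega)).cons ?_
      intro hmem
      obtain ⟨t, ht, hle, heq⟩ := earWalkAux_support H hpq (j + 1) (by omega) _ hmem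
      have := congrArg Fin.val (earVert_injective hpq heq)
      simp only at this
      omega
  termination_by j _ => m + 1 - j

lemma earWalkAux_firstEdge (H : SimpleGraph V) (hpq : p ≠ q) :
    s(Sum.inl p, earVert p q m ⟨1, by omega⟩) ∈
      (earWalkAux H p q m hpq 0 (by omega)).edges := by
  rw [earWalkAux]
  rw [dif_neg (by omega : ¬ (0 : ℕ) = m + 1)]
  rw [Walk.edges_cons]
  left

/-- The ear walk from `Sum.inl p` to `Sum.inl q`. -/
def earWalk (H : SimpleGraph V) (p q : V) (m : ℕ) (hpq : p ≠ q) :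
    (addEar H p q m).Walk (Sum.inl p) (Sum.inl q) :=
  (earWalkAux H p q m hpq 0 (by omega)).copy (by simp [earVert]) rfl

lemma earWalk_isPath (H : SimpleGraph V) (hpq : p ≠ q) : (earWalk H p q m hpq).IsPath := by
  rw [earWalk, Walk.isPath_copy]
  exact earWalkAux_isPath H hpq 0 (by omega)

lemma earWalk_firstEdge (H : SimpleGraph V) (hpq : p ≠ q) :
    s(Sum.inl p, earVert p q m ⟨1, by omega⟩) ∈ (earWalk H p q m hpq).edges := by
  rw [earWalk, Walk.edges_copy]
  exact earWalkAux_firstEdge H hpq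

lemma earWalk_support_mem (H : SimpleGraph V) (hpq : p ≠ q) {v : V ⊕ Fin m}
    (hv : v ∈ (earWalk H p q m hpq).support) :
    v = Sum.inl p ∨ v = Sum.inl q ∨ ∃ j : Fin m, v = Sum.inr j := by
  rw [earWalk, Walk.support_copy] at hv
  obtain ⟨t, ht, -, rfl⟩ := earWalkAux_support H hpq 0 (by omega) v hv
  unfold earVert
  split_ifs with h1 h2
  · exact Or.inl rfl
  · exact Or.inr (Or.inl rfl)
  · exact Or.inr (Or.inr ⟨_, rfl⟩)

lemma earWalk_tail_mem (H : SimpleGraph V) (hpq : p ≠ q) {v : V ⊕ Fin m}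
    (hv : v ∈ (earWalk H p q m hpq).support.tail) :
    v = Sum.inl q ∨ ∃ j : Fin m, v = Sum.inr j := by
  have hsup : v ∈ (earWalk H p q m hpq).support :=
    Walk.support_eq_cons (earWalk H p q m hpq) ▸ List.mem_cons_of_mem _ hv
  rcases earWalk_support_mem H hpq hsup with h | h | h
  · exfalso
    have hnd := (earWalk_isPath H hpq (m := m)).support_nodup
    rw [Walk.support_eq_cons] at hnd
    exact (List.nodup_cons.mp hnd).1 (h ▸ hv)
  · exact Or.inl h
  · exact Or.inr h

lemma earWalk_rev_tail_mem (H : SimpleGraph V) (hpq : p ≠ q) {v : V ⊕ Fin m}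
    (hv : v ∈ (earWalk H p q m hpq).reverse.support.tail) :
    v = Sum.inl p ∨ ∃ j : Fin m, v = Sum.inr j := by
  have hsup : v ∈ (earWalk H p q m hpq).reverse.support :=
    Walk.support_eq_cons _ ▸ List.mem_cons_of_mem _ hv
  rw [Walk.support_reverse, List.mem_reverse] at hsup
  rcases earWalk_support_mem H hpq hsup with h | h | h
  · exact Or.inl h
  · exfalso
    have hnd := (earWalk_isPath H hpq (m := m)).reverse.support_nodup
    rw [Walk.support_eq_cons] at hnd
    exact (List.nodup_cons.mp hnd).1 (h ▸ hv)
  · exact Or.inr h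

/-- Gluing lemma: a path in `H` to `a`, an ear-graph path from `inl a` to `inl b`,
and a path in `H` from `b`, glued into a path in the ear graph. -/
lemma glue_isPath (H : SimpleGraph V) {x y a b : V}
    (w1 : H.Walk x a) (w3 : H.Walk b y) (h1 : w1.IsPath) (h3 : w3.IsPath)
    (E : (addEar H p q m).Walk (Sum.inl a) (Sum.inl b)) (hE : E.IsPath)
    (hEtail : ∀ v ∈ E.support.tail, v = Sum.inl b ∨ ∃ j : Fin m, v = Sum.inr j)
    (hb1 : b ∉ w1.support)
    (hdisj : ∀ v ∈ w1.support, v ∈ w3.support.tail → False) :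
    (((w1.map (earHom H p q m)).append E).append (w3.map (earHom H p q m))).IsPath := by
  have hC : (w3.map (earHom H p q m)).support.tail = w3.support.tail.map Sum.inl := by
    rw [Walk.support_map, Walk.support_eq_cons w3]
    rfl
  have hA : (w1.map (earHom H p q m)).support = w1.support.map Sum.inl :=
    Walk.support_map _ _
  erw [Walk.isPath_def, Walk.support_append, Walk.support_append, List.append_assoc,
    hC, hA]
  have memA : ∀ v ∈ w1.support.map (Sum.inl : V → V ⊕ Fin m), ∃ u ∈ w1.support, v = Sum.inl u := by
    intro v hv
    obtain ⟨u, hu, rfl⟩ := List.mem_map.mp hv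
    exact ⟨u, hu, rfl⟩
  have memC : ∀ v ∈ w3.support.tail.map (Sum.inl : V → V ⊕ Fin m),
      ∃ u ∈ w3.support.tail, v = Sum.inl u := by
    intro v hv
    obtain ⟨u, hu, rfl⟩ := List.mem_map.mp hv
    exact ⟨u, hu, rfl⟩
  refine List.Nodup.append (List.Nodup.map Sum.inl_injective h1.support_nodup)
    (List.Nodup.append (hE.support_nodup.tail)
      (List.Nodup.map Sum.inl_injective (h3.support_nodup.tail)) ?_)
    ?_
  · -- Disjoint E.tail C.tail
    intro v hvE hvC
    obtain ⟨u, hu, rfl⟩ := memC v hvC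
    rcases hEtail _ hvE with h | ⟨j, hj⟩
    · have : u = b := Sum.inl_injective h.symm ▸ (Sum.inl_injective h).symm
      subst this
      have hnd := h3.support_nodup
      rw [Walk.support_eq_cons] at hnd
      exact (List.nodup_cons.mp hnd).1 hu
    · exact Sum.inl_ne_inr hj
  · -- Disjoint A (E.tail ++ C.tail)
    intro v hvA hv
    obtain ⟨u, hu, rfl⟩ := memA v hvA
    rcases List.mem_append.mp hv with hvE | hvC
    · rcases hEtail _ hvE with h | ⟨j, hj⟩
      · exact hb1 ((Sum.inl_injective h) ▸ hu)
      · exact Sum.inl_ne_inr hj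
    · obtain ⟨u', hu', hequ⟩ := memC _ hvC
      exact hdisj u hu (Sum.inl_injective hequ ▸ hu')

lemma e0_not_mem_map (H : SimpleGraph V) {x y : V} (hnew : m = 0 → ¬ H.Adj p q)
    (P : H.Walk x y) :
    s(Sum.inl p, earVert p q m ⟨1, by omega⟩) ∉ (P.map (earHom H p q m)).edges := by
  intro hmem
  rw [Walk.edges_map, List.mem_map] at hmem
  obtain ⟨e, he, heq⟩ := hmem
  induction e using Sym2.ind with
  | _ a b =>
    rcases m with - | m'
    · have h1 : earVert p q 0 ⟨1, by omega⟩ = Sum.inl q := by simp [earVert]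
      rw [h1] at heq
      have heq' : s(Sum.inl a, Sum.inl b) = s((Sum.inl p : V ⊕ Fin 0), Sum.inl q) := heq
      rw [Sym2.eq_iff] at heq'
      have hadj : H.Adj a b := P.adj_of_mem_edges he
      rcases heq' with ⟨ha, hb⟩ | ⟨ha, hb⟩
      · exact hnew rfl (Sum.inl_injective ha ▸ Sum.inl_injective hb ▸ hadj)
      · exact hnew rfl (Sum.inl_injective hb ▸ Sum.inl_injective ha ▸ hadj).symm
    · have h1 : earVert p q (m' + 1) ⟨1, by omega⟩ = Sum.inr ⟨0, by omega⟩ := by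
        simp [earVert]
      rw [h1] at heq
      have hmem2 : (Sum.inr ⟨0, by omega⟩ : V ⊕ Fin (m' + 1)) ∈
          Sym2.map (earHom H p q (m' + 1)) s(a, b) := by
        rw [heq]
        exact Sym2.mem_mk_right _ _
      rw [Sym2.mem_map] at hmem2
      obtain ⟨c, -, hc⟩ := hmem2
      have hc' : (Sum.inl c : V ⊕ Fin (m' + 1)) = Sum.inr ⟨0, by omega⟩ := hc
      exact Sum.inl_ne_inr hc'

end EarProof

open EarProof in
/-- Let `p ≠ q` be two vertices lying on a common simple `xy`-path of a
finite simple graph `H`. Adding an ear from `p` to `q` of length `k = m + 1 ≥ 1`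
(with `m` new internal vertices; if `k = 1`, i.e. `m = 0`, the ear is a new edge `{p,q}`
not already in `H`) increases the number of simple `xy`-paths by at least one. -/
theorem addEar_increases_num_paths
    {V : Type*} [Fintype V] [DecidableEq V] (H : SimpleGraph V)
    (x y p q : V) (hpq : p ≠ q) (m : ℕ)
    (hnew : m = 0 → ¬ H.Adj p q)
    (hcommon : ∃ w : H.Walk x y, w.IsPath ∧ p ∈ w.support ∧ q ∈ w.support) :
    Nat.card (H.Path x y) + 1 ≤
      Nat.card ((addEar H p q m).Path (Sum.inl x) (Sum.inl y)) := by
  classical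
  obtain ⟨w, hw, hp, hq⟩ := hcommon
  -- split w at p
  set w1 := w.takeUntil p hp with hw1def
  set w2 := w.dropUntil p hp with hw2def
  have hw1 : w1.IsPath := hw.takeUntil hp
  have hw2 : w2.IsPath := hw.dropUntil hp
  have hwsup : w.support = w1.support ++ w2.support.tail := by
    conv_lhs => rw [← w.take_spec hp]
    rw [Walk.support_append]
  have hwnd : (w1.support ++ w2.support.tail).Nodup := hwsup ▸ hw.support_nodup
  have hdisj12 : ∀ v ∈ w1.support, v ∈ w2.support.tail → False := by
    intro v hv1 hv2
    exact (List.nodup_append'.mp hwnd).2.2 hv1 hv2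
  -- the special path
  obtain ⟨P0, hP0⟩ : ∃ P0 : (addEar H p q m).Path (Sum.inl x) (Sum.inl y),
      s(Sum.inl p, earVert p q m ⟨1, by omega⟩) ∈ P0.val.edges := by
    by_cases hqc : q ∈ w2.support
    · -- p comes before q
      set w3 := w2.dropUntil q hqc with hw3def
      have hw3 : w3.IsPath := hw2.dropUntil hqc
      have hq1 : q ∉ w1.support := by
        intro hq1
        have : q ∈ w2.support.tail := by
          have := Walk.support_eq_cons w2
          rcases List.mem_cons.mp (this ▸ hqc) with h | h
          · exact absurd h.symm hpq
          · exact h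
        exact hdisj12 q hq1 this
      have hsub3 : w3.support.tail ⊆ w2.support.tail := by
        have : w2.support.tail = (w2.takeUntil q hqc).support.tail ++ w3.support.tail := by
          conv_lhs => rw [← w2.take_spec hqc]
          rw [Walk.tail_support_append]
        rw [this]
        exact fun a ha => List.mem_append_right _ ha
      have hpath := glue_isPath H w1 w3 hw1 hw3 (earWalk H p q m hpq)
        (earWalk_isPath H hpq) (fun v hv => earWalk_tail_mem H hpq hv) hq1
        (fun v hv1 hv3 => hdisj12 v hv1 (hsub3 hv3))
      have hmem : s(Sum.inl p, earVert p q m ⟨1, by omega⟩) ∈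
          (((w1.map (earHom H p q m)).append (earWalk H p q m hpq)).append
            (w3.map (earHom H p q m))).edges := by
        erw [Walk.edges_append, Walk.edges_append]
        exact List.mem_append_left _ (List.mem_append_right _ (earWalk_firstEdge H hpq))
      exact ⟨⟨_, hpath⟩, hmem⟩
    · -- q comes before p
      have hq1 : q ∈ w1.support := by
        have hq' : q ∈ ((w.takeUntil p hp).append (w.dropUntil p hp)).support := by
          rw [w.take_spec hp]; exact hq
        rcases (Walk.mem_support_append_iff _ _).mp hq' with h | h
        · exact h
        · exact absurd h hqc
      set u1 := w1.takeUntil q hq1 with hu1def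
      have hu1 : u1.IsPath := hw1.takeUntil hq1
      have hp1 : p ∉ u1.support := by
        intro hpu
        have hnd1 := hw1.support_nodup
        have hsplit : w1.support = u1.support ++ (w1.dropUntil q hq1).support.tail := by
          conv_lhs => rw [← w1.take_spec hq1]
          rw [Walk.support_append]
        have hnd1' := hsplit ▸ hnd1
        have hpend : p ∈ (w1.dropUntil q hq1).support := Walk.end_mem_support _
        have hptail : p ∈ (w1.dropUntil q hq1).support.tail := by
          rcases List.mem_cons.mp ((Walk.support_eq_cons _) ▸ hpend) with h | h
          · exact absurd h hpq
          · exact h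
        exact (List.nodup_append'.mp hnd1').2.2 hpu hptail
      have hdisjB : ∀ v ∈ u1.support, v ∈ w2.support.tail → False := by
        intro v hv1 hv2
        exact hdisj12 v (Walk.support_takeUntil_subset _ hq1 hv1) hv2
      have hpath := glue_isPath H u1 w2 hu1 hw2 (earWalk H p q m hpq).reverse
        ((earWalk_isPath H hpq).reverse) (fun v hv => earWalk_rev_tail_mem H hpq hv) hp1
        hdisjB
      have hmem : s(Sum.inl p, earVert p q m ⟨1, by omega⟩) ∈
          (((u1.map (earHom H p q m)).append (earWalk H p q m hpq).reverse).append
            (w2.map (earHom H p q m))).edges := by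
        erw [Walk.edges_append, Walk.edges_append, Walk.edges_reverse]
        exact List.mem_append_left _
          (List.mem_append_right _ (List.mem_reverse.mpr (earWalk_firstEdge H hpq)))
      exact ⟨⟨_, hpath⟩, hmem⟩
  -- counting
  haveI : DecidableRel H.Adj := Classical.decRel _
  haveI : DecidableRel (addEar H p q m).Adj := Classical.decRel _
  have hinj' : Function.Injective (earHom H p q m) := earHom_injective H
  let f : H.Path x y ⊕ Unit → (addEar H p q m).Path (Sum.inl x) (Sum.inl y) :=
    fun z => Sum.elim (fun P => P.map (earHom H p q m) hinj') (fun _ => P0) z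
  have hfinj : Function.Injective f := by
    rintro (P | ⟨⟩) (P' | ⟨⟩) h
    · exact congrArg Sum.inl (Path.map_injective hinj' x y h)
    · exfalso
      have h' : P.map (earHom H p q m) hinj' = P0 := h
      have hmem : s(Sum.inl p, earVert p q m ⟨1, by omega⟩) ∈
          (Walk.map (earHom H p q m) (P : H.Walk x y)).edges := by
        rw [show Walk.map (earHom H p q m) (P : H.Walk x y) =
          (P.map (earHom H p q m) hinj').val from rfl, h']
        exact hP0
      exact e0_not_mem_map H hnew (P : H.Walk x y) hmem
    · exfalso
      have h' : P'.map (earHom H p q m) hinj' = P0 := h.symm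
      have hmem : s(Sum.inl p, earVert p q m ⟨1, by omega⟩) ∈
          (Walk.map (earHom H p q m) (P' : H.Walk x y)).edges := by
        rw [show Walk.map (earHom H p q m) (P' : H.Walk x y) =
          (P'.map (earHom H p q m) hinj').val from rfl, h']
        exact hP0
      exact e0_not_mem_map H hnew (P' : H.Walk x y) hmem
    · rfl
  calc Nat.card (H.Path x y) + 1 = Nat.card (H.Path x y ⊕ Unit) := by
        simp [Nat.card_sum]
    _ ≤ _ := Nat.card_le_card_of_injective f hfinj
end

section
/- Let G be a finite simple undirected graph and let b = {s, t} be an edge of G. The map sending a simple cycle c of G that contains the edge b to the path obtained by removing b from c is a bijection between the set of simple cycles of G containing b and the set of simple paths from s to t in the graph G − b. -/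
open SimpleGraph

private lemma path_first_edge {V : Type*} {H : SimpleGraph V} {u v t' : V}
    (p : H.Walk u v) (hp : p.IsPath) (he : s(u,t') ∈ p.edges) :
    ∃ (h : H.Adj u t') (q : H.Walk t' v), p = SimpleGraph.Walk.cons h q := by
  cases p with
  | nil => simp at he
  | cons h q =>
    rename_i w
    rw [SimpleGraph.Walk.edges_cons, List.mem_cons] at he
    rw [SimpleGraph.Walk.cons_isPath_iff] at hp
    rcases he with he | he
    · have : u = u ∧ w = t' ∨ u = t' ∧ w = u := by
        rw [Sym2.eq_iff] at he; tauto
      rcases this with ⟨-, rfl⟩ | ⟨rfl, rfl⟩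
      · exact ⟨h, q, rfl⟩
      · exact absurd rfl h.ne
    · exact absurd (SimpleGraph.Walk.fst_mem_support_of_mem_edges q he) hp.2

private lemma path_edges_toFinset_inj {V : Type*} [DecidableEq V] {H : SimpleGraph V}
    {u v : V} (p : H.Walk u v) (hp : p.IsPath) :
    ∀ q : H.Walk u v, q.IsPath → p.edges.toFinset = q.edges.toFinset → p = q := by
  induction p with
  | nil =>
    intro q hq h
    cases q with
    | nil => rfl
    | cons h' q' =>
      simp only [SimpleGraph.Walk.edges_nil, List.toFinset_nil,
        SimpleGraph.Walk.edges_cons, List.toFinset_cons] at h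
      exact absurd h.symm (by simp)
  | cons h p' ih =>
    rename_i a w b
    intro q hq hE
    have he : s(a, w) ∈ q.edges := by
      rw [← List.mem_toFinset, ← hE]; simp
    obtain ⟨h₂, q', rfl⟩ := path_first_edge q hq he
    rw [SimpleGraph.Walk.cons_isPath_iff] at hp hq
    have hnp : s(a, w) ∉ p'.edges := fun hmem =>
      hp.2 (SimpleGraph.Walk.fst_mem_support_of_mem_edges p' hmem)
    have hnq : s(a, w) ∉ q'.edges := fun hmem =>
      hq.2 (SimpleGraph.Walk.fst_mem_support_of_mem_edges q' hmem)
    have hE' : p'.edges.toFinset = q'.edges.toFinset := by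
      simp only [SimpleGraph.Walk.edges_cons, List.toFinset_cons] at hE
      have := congrArg (Finset.erase · s(a, w)) hE
      simpa [Finset.erase_insert, List.mem_toFinset, hnp, hnq] using this
    rw [ih hp.1 q' hq.1 hE']

/-- Let `b = {s,t}` be an edge of `G`. Identifying a simple cycle
(up to rotation and reflection) with its edge set, the map sending a simple `st`-path
`p` of `G − b` to the cycle obtained by adding back `b` (i.e. with edge set
`insert b p.edges`) is a bijection between the simple `st`-paths of `G − b` and the
simple cycles of `G` containing the edge `b`. -/
theorem cycles_through_edge_biject_with_paths
    {V : Type*} [Fintype V] [DecidableEq V] (G : SimpleGraph V)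
    {s t : V} (hb : G.Adj s t) :
    Set.BijOn (fun p : (G.deleteEdges {s(s,t)}).Walk s t => insert s(s,t) p.edges.toFinset)
      {p : (G.deleteEdges {s(s,t)}).Walk s t | p.IsPath}
      {S : Finset (Sym2 V) | ∃ c : G.Walk t t, c.IsCycle ∧ c.edges.toFinset = S ∧
        s(s,t) ∈ c.edges} := by
  have hnb : ∀ (p : (G.deleteEdges {s(s,t)}).Walk s t), s(s,t) ∉ p.edges := by
    intro p hmem
    have := p.edges_subset_edgeSet hmem
    rw [SimpleGraph.edgeSet_deleteEdges] at this
    exact this.2 rfl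
  refine ⟨?_, ?_, ?_⟩
  · -- MapsTo
    intro p hp
    have hsub : ∀ e ∈ p.edges, e ∈ G.edgeSet := fun e he =>
      (SimpleGraph.edgeSet_deleteEdges _ ▸ p.edges_subset_edgeSet he).1
    refine ⟨SimpleGraph.Walk.cons hb.symm (p.transfer G hsub), ?_, ?_, ?_⟩
    · rw [SimpleGraph.Walk.cons_isCycle_iff, SimpleGraph.Walk.edges_transfer]
      refine ⟨hp.transfer hsub, fun hh => hnb p ?_⟩
      have hsw : s(t,s) = s(s,t) := Sym2.eq_swap
      rwa [hsw] at hh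
    · simp [SimpleGraph.Walk.edges_transfer, Sym2.eq_swap]
    · simp [Sym2.eq_swap]
  · -- InjOn
    intro p hp q hq hE
    simp only at hE
    have hE' : p.edges.toFinset = q.edges.toFinset := by
      have := congrArg (Finset.erase · s(s,t)) hE
      simpa [Finset.erase_insert, List.mem_toFinset, hnb p, hnb q] using this
    exact path_edges_toFinset_inj p hp q hq hE'
  · -- SurjOn
    rintro S ⟨c, hc, rfl, hbe⟩
    have hs : s ∈ c.support := SimpleGraph.Walk.fst_mem_support_of_mem_edges c hbe
    have hc' : (c.rotate s hs).IsCycle := hc.rotate hs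
    have hEr : (c.rotate s hs).edges.toFinset = c.edges.toFinset := by
      ext e; simp [List.mem_toFinset, (c.rotate_edges s hs).perm.mem_iff]
    have hbe' : s(s,t) ∈ (c.rotate s hs).edges := (c.rotate_edges s hs).perm.mem_iff.2 hbe
    rw [← hEr]
    generalize c.rotate s hs = c' at hc' hbe' ⊢
    clear hEr hbe hc hs
    cases c' with
    | nil => simp at hbe'
    | cons h q =>
      rename_i v
      rw [SimpleGraph.Walk.cons_isCycle_iff] at hc'
      obtain ⟨hq, hnsv⟩ := hc'
      rw [SimpleGraph.Walk.edges_cons, List.mem_cons] at hbe'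
      rcases hbe' with hbe' | hbe'
      · -- first edge is b, so v = t
        have hvt : v = t := by
          rw [Sym2.eq_iff] at hbe'
          rcases hbe' with ⟨-, hv⟩ | ⟨hsv, -⟩
          · exact hv.symm
          · exact absurd hsv h.ne
        subst v
        have hqb : ∀ e ∈ q.reverse.edges, e ∉ ({s(s,t)} : Set (Sym2 V)) := by
          intro e he
          rw [SimpleGraph.Walk.edges_reverse, List.mem_reverse] at he
          rintro rfl
          exact hnsv he
        refine ⟨q.reverse.toDeleteEdges _ hqb, ?_, ?_⟩
        · simp only [Set.mem_setOf_eq]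
          exact SimpleGraph.Walk.IsPath.toDeleteEdges G _ hq.reverse hqb
        simp only [SimpleGraph.Walk.toDeleteEdges, SimpleGraph.Walk.edges_transfer,
          SimpleGraph.Walk.edges_reverse, SimpleGraph.Walk.edges_cons, List.toFinset_cons]
        ext e; simp [List.mem_toFinset]
      · -- b is in q
        have hne : s(s,v) ≠ s(s,t) := fun hEq => hnsv (hEq ▸ hbe')
        have hrb : s(s,t) ∈ q.reverse.edges := by
          rw [SimpleGraph.Walk.edges_reverse, List.mem_reverse]; exact hbe'
        obtain ⟨h₂, r', hr⟩ := path_first_edge q.reverse hq.reverse hrb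
        have hr'path : r'.IsPath ∧ s ∉ r'.support := by
          have := hq.reverse
          rw [hr, SimpleGraph.Walk.cons_isPath_iff] at this
          exact this
        have hnr' : s(s,t) ∉ r'.edges := fun hmem =>
          hr'path.2 (SimpleGraph.Walk.fst_mem_support_of_mem_edges r' hmem)
        have hwb : ∀ e ∈ (SimpleGraph.Walk.cons h r'.reverse).edges,
            e ∉ ({s(s,t)} : Set (Sym2 V)) := by
          intro e he
          rw [SimpleGraph.Walk.edges_cons, List.mem_cons] at he
          rintro rfl
          rcases he with he | he
          · exact hne he.symm
          · rw [SimpleGraph.Walk.edges_reverse, List.mem_reverse] at he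
            exact hnr' he
        have hwpath : (SimpleGraph.Walk.cons h r'.reverse).IsPath := by
          rw [SimpleGraph.Walk.cons_isPath_iff]
          refine ⟨hr'path.1.reverse, ?_⟩
          rw [SimpleGraph.Walk.support_reverse, List.mem_reverse]
          exact hr'path.2
        refine ⟨(SimpleGraph.Walk.cons h r'.reverse).toDeleteEdges _ hwb, ?_, ?_⟩
        · simp only [Set.mem_setOf_eq]
          exact SimpleGraph.Walk.IsPath.toDeleteEdges G _ hwpath hwb
        simp only [SimpleGraph.Walk.toDeleteEdges, SimpleGraph.Walk.edges_transfer,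
          SimpleGraph.Walk.edges_cons, SimpleGraph.Walk.edges_reverse, List.toFinset_cons]
        have hqE : q.edges.toFinset = insert s(s,t) r'.edges.toFinset := by
          have : q.edges.toFinset = q.reverse.edges.toFinset := by
            ext e; simp [List.mem_toFinset, SimpleGraph.Walk.edges_reverse]
          rw [this, hr]
          simp [SimpleGraph.Walk.edges_cons]
        rw [hqE]
        ext e; simp [List.mem_toFinset]; tauto
end

section
/- Let B be a biconnected (2-connected) finite simple undirected graph, let b = {s, t} be an edge of B, and let e be any edge of B with e ≠ b. Then there exists a simple cycle of B containing both edges b and e; equivalently, e lies on some simple path from s to t in the graph B − b. -/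
open SimpleGraph

namespace TwoConnAux

variable {V : Type*} {G : SimpleGraph V}

open SimpleGraph.Walk

/-- Appending two paths that meet only at the junction vertex gives a path. -/
lemma isPath_append' {u v w : V} {p : G.Walk u v} {q : G.Walk v w}
    (hp : p.IsPath) (hq : q.IsPath)
    (h : ∀ x, x ∈ p.support → x ∈ q.support → x = v) :
    (p.append q).IsPath := by
  rw [Walk.isPath_def, Walk.support_append]
  refine List.Nodup.append hp.support_nodup (hq.support_nodup.sublist (List.tail_sublist _)) ?_
  intro x hxp hxq
  have hxq' : x ∈ q.support := List.mem_of_mem_tail hxq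
  have hx : x = v := h x hxp hxq'
  subst hx
  have := hq.support_nodup
  rw [q.support_eq_cons] at this
  exact (List.nodup_cons.mp this).1 hxq

/-- On a path, the take/drop pieces at a vertex meet only at that vertex. -/
lemma eq_of_mem_takeUntil_mem_dropUntil [DecidableEq V] {u v w x : V} {p : G.Walk v w}
    (hp : p.IsPath) (h : u ∈ p.support)
    (h1 : x ∈ (p.takeUntil u h).support) (h2 : x ∈ (p.dropUntil u h).support) : x = u := by
  have hnd := hp.support_nodup
  rw [← Walk.take_spec p h, Walk.support_append] at hnd
  have hdis := List.disjoint_of_nodup_append hnd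
  rcases (by rw [(p.dropUntil u h).support_eq_cons] at h2; exact List.mem_cons.mp h2) with h2' | h2'
  · exact h2'
  · exact absurd h2' (hdis h1)

/-- First hit of a set by a walk. -/
lemma exists_first_hit {y z : V} (S : Set V) (W : G.Walk y z) (hy : y ∉ S) (hz : z ∈ S) :
    ∃ w, w ∈ S ∧ ∃ W' : G.Walk y w, (∀ v ∈ W'.support, v = w ∨ v ∉ S) ∧
      W'.support ⊆ W.support ∧ W'.edges ⊆ W.edges := by
  induction W with
  | nil => exact absurd hz hy
  | @cons a b c h rest ih =>
    by_cases hb : b ∈ S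
    · refine ⟨b, hb, Walk.cons h Walk.nil, ?_, ?_, ?_⟩
      · intro v hv
        simp only [Walk.support_cons, Walk.support_nil, List.mem_cons, List.mem_singleton] at hv
        rcases hv with rfl | rfl | h'
        · exact Or.inr hy
        · exact Or.inl rfl
        · exact absurd h' List.not_mem_nil
      · intro v hv
        simp only [Walk.support_cons, Walk.support_nil, List.mem_cons, List.mem_singleton] at hv ⊢
        rcases hv with rfl | rfl | h'
        · exact Or.inl rfl
        · exact Or.inr rest.start_mem_support
        · exact absurd h' List.not_mem_nil
      · intro f hf
        simp only [Walk.edges_cons, Walk.edges_nil, List.mem_cons, List.not_mem_nil,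
          or_false, List.mem_singleton] at hf
        simp [hf]
    · obtain ⟨w, hw, W', hprop, hsub, hesub⟩ := ih hb hz
      refine ⟨w, hw, Walk.cons h W', ?_, ?_, ?_⟩
      · intro v hv
        rw [Walk.support_cons, List.mem_cons] at hv
        rcases hv with rfl | hv
        · exact Or.inr hy
        · exact hprop v hv
      · intro v hv
        rw [Walk.support_cons, List.mem_cons] at hv ⊢
        rcases hv with rfl | hv
        · exact Or.inl rfl
        · exact Or.inr (hsub hv)
      · intro f hf
        rw [Walk.edges_cons, List.mem_cons] at hf ⊢
        rcases hf with rfl | hf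
        · exact Or.inl rfl
        · exact Or.inr (hesub hf)

/-- From no-cut-vertex: a path between two vertices avoiding a third. -/
lemma exists_path_avoiding [DecidableEq V] {B : SimpleGraph V} {v a b : V}
    (hnc : (B.induce {x | x ≠ v}).Connected) (ha : a ≠ v) (hb : b ≠ v) :
    ∃ P : B.Walk a b, P.IsPath ∧ v ∉ P.support := by
  obtain ⟨W⟩ := hnc ⟨a, ha⟩ ⟨b, hb⟩
  let W' : B.Walk a b := W.map (SimpleGraph.Embedding.induce {x | x ≠ v}).toHom
  refine ⟨W'.bypass, W'.bypass_isPath, fun hv => ?_⟩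
  have hv' : v ∈ W'.support := W'.support_bypass_subset hv
  rw [show W'.support = _ from Walk.support_map _ _, List.mem_map] at hv'
  obtain ⟨⟨u, hu⟩, -, h⟩ := hv'
  exact hu h

/-- Splice a path `R` (internally disjoint from `p0`) between two vertices of the
path `p0`, obtaining a new `s`-`t` path containing all edges of `R`. -/
lemma splice [DecidableEq V] {B : SimpleGraph V} {s t x w : V} {p0 : B.Walk s t}
    (hp0 : p0.IsPath) (hx : x ∈ p0.support) (hw : w ∈ p0.support) (hxw : x ≠ w)
    {R : B.Walk x w} (hR : R.IsPath)
    (hint : ∀ v ∈ R.support, v = x ∨ v = w ∨ v ∉ p0.support) :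
    ∃ q : B.Walk s t, q.IsPath ∧ (∀ f ∈ q.edges, f ∈ p0.edges ∨ f ∈ R.edges) ∧
      (∀ f ∈ R.edges, f ∈ q.edges) := by
  set p1 := p0.takeUntil x hx with hp1
  set p2 := p0.dropUntil x hx with hp2
  have hp1path : p1.IsPath := hp0.takeUntil hx
  have hp2path : p2.IsPath := hp0.dropUntil hx
  have hw' : w ∈ p1.support ∨ w ∈ p2.support := by
    rw [← Walk.mem_support_append_iff]
    rw [hp1, hp2, Walk.take_spec]
    exact hw
  have hp1sub : ∀ v ∈ p1.support, v ∈ p0.support := fun v hv => p0.support_takeUntil_subset hx hv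
  have hp2sub : ∀ v ∈ p2.support, v ∈ p0.support := fun v hv => p0.support_dropUntil_subset hx hv
  have hmeet : ∀ v, v ∈ p1.support → v ∈ p2.support → v = x :=
    fun v h1 h2 => eq_of_mem_takeUntil_mem_dropUntil hp0 hx h1 h2
  rcases hw' with hw1 | hw2
  · -- w comes before x on p0
    set p1' := p1.takeUntil w hw1 with hp1'
    have hp1'path : p1'.IsPath := hp1path.takeUntil hw1
    have hxp1' : x ∉ p1'.support := by
      intro hx1
      exact hxw (eq_of_mem_takeUntil_mem_dropUntil hp1path hw1 hx1
        (Walk.end_mem_support _))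
    have hp1'sub : ∀ v ∈ p1'.support, v ∈ p1.support :=
      fun v hv => p1.support_takeUntil_subset hw1 hv
    -- inner walk : from w to t
    have hinner : (R.reverse.append p2).IsPath := by
      refine isPath_append' hR.reverse hp2path ?_
      intro v hv1 hv2
      rw [Walk.support_reverse, List.mem_reverse] at hv1
      rcases hint v hv1 with rfl | rfl | hv
      · rfl
      · exact absurd (hmeet _ hw1 hv2) (fun h => hxw h.symm)
      · exact absurd (hp2sub v hv2) hv
    refine ⟨p1'.append (R.reverse.append p2), ?_, ?_, ?_⟩
    · refine isPath_append' hp1'path hinner ?_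
      intro v hv1 hv2
      rw [Walk.mem_support_append_iff] at hv2
      rcases hv2 with hv2 | hv2
      · rw [Walk.support_reverse, List.mem_reverse] at hv2
        rcases hint v hv2 with rfl | rfl | hv
        · exact absurd hv1 hxp1'
        · rfl
        · exact absurd (hp1sub v (hp1'sub v hv1)) hv
      · have := hmeet v (hp1'sub v hv1) hv2
        subst this
        exact absurd hv1 hxp1'
    · intro f hf
      rw [Walk.edges_append, List.mem_append, Walk.edges_append, List.mem_append] at hf
      rcases hf with hf | hf | hf
      · exact Or.inl (p0.edges_takeUntil_subset hx (p1.edges_takeUntil_subset hw1 hf))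
      · rw [Walk.edges_reverse, List.mem_reverse] at hf
        exact Or.inr hf
      · exact Or.inl (p0.edges_dropUntil_subset hx hf)
    · intro f hf
      rw [Walk.edges_append, List.mem_append, Walk.edges_append, List.mem_append]
      exact Or.inr (Or.inl (by rw [Walk.edges_reverse, List.mem_reverse]; exact hf))
  · -- w comes after x on p0
    set p4 := p2.dropUntil w hw2 with hp4
    have hp4path : p4.IsPath := hp2path.dropUntil hw2
    have hxp4 : x ∉ p4.support := by
      intro hx4
      exact hxw (eq_of_mem_takeUntil_mem_dropUntil hp2path hw2
        (Walk.start_mem_support _) hx4)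
    have hp4sub : ∀ v ∈ p4.support, v ∈ p2.support :=
      fun v hv => p2.support_dropUntil_subset hw2 hv
    have hinner : (R.append p4).IsPath := by
      refine isPath_append' hR hp4path ?_
      intro v hv1 hv2
      rcases hint v hv1 with rfl | rfl | hv
      · exact absurd hv2 hxp4
      · rfl
      · exact absurd (hp2sub v (hp4sub v hv2)) hv
    refine ⟨p1.append (R.append p4), ?_, ?_, ?_⟩
    · refine isPath_append' hp1path hinner ?_
      intro v hv1 hv2
      rw [Walk.mem_support_append_iff] at hv2
      rcases hv2 with hv2 | hv2
      · rcases hint v hv2 with rfl | rfl | hv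
        · rfl
        · exact absurd (hmeet _ hv1 hw2) (fun h => hxw h.symm)
        · exact absurd (hp1sub v hv1) hv
      · have := hmeet v hv1 (hp4sub v hv2)
        subst this
        exact absurd hv2 hxp4
    · intro f hf
      rw [Walk.edges_append, List.mem_append, Walk.edges_append, List.mem_append] at hf
      rcases hf with hf | hf | hf
      · exact Or.inl (p0.edges_takeUntil_subset hx hf)
      · exact Or.inr hf
      · exact Or.inl (p0.edges_dropUntil_subset hx (p2.edges_dropUntil_subset hw2 hf))
    · intro f hf
      rw [Walk.edges_append, List.mem_append, Walk.edges_append, List.mem_append]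
      exact Or.inr (Or.inl hf)

variable {B : SimpleGraph V}

/-- Base case: edge incident to `t`. -/
lemma base_t [DecidableEq V] (hnocut : ∀ v : V, (B.induce {x | x ≠ v}).Connected)
    {s t y : V} (hb : B.Adj s t) (hty : B.Adj t y) (hys : y ≠ s) :
    ∃ p : B.Walk s t, p.IsPath ∧ s(s, t) ∉ p.edges ∧ s(t, y) ∈ p.edges := by
  obtain ⟨P, hP, htP⟩ := exists_path_avoiding (hnocut t) hb.ne hty.ne'
  refine ⟨P.append (Walk.cons hty.symm Walk.nil), ?_, ?_, ?_⟩
  · refine isPath_append' hP (by simp [hty.ne']) ?_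
    intro v hv1 hv2
    simp only [Walk.support_cons, Walk.support_nil, List.mem_cons, List.mem_singleton] at hv2
    rcases hv2 with rfl | rfl | h'
    · rfl
    · exact absurd hv1 htP
    · exact absurd h' List.not_mem_nil
  · rw [Walk.edges_append, List.mem_append]
    rintro (hf | hf)
    · exact htP (P.snd_mem_support_of_mem_edges hf)
    · simp only [Walk.edges_cons, Walk.edges_nil, List.mem_singleton, List.mem_cons,
        List.not_mem_nil, or_false] at hf
      rw [Sym2.eq_iff] at hf
      rcases hf with ⟨rfl, -⟩ | ⟨h1, h2⟩
      · exact hys rfl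
      · exact hb.ne h1
  · rw [Walk.edges_append, List.mem_append]
    right
    simp [Sym2.eq_swap]

/-- Base case: edge incident to `s`. -/
lemma base_s [DecidableEq V] (hnocut : ∀ v : V, (B.induce {x | x ≠ v}).Connected)
    {s t y : V} (hb : B.Adj s t) (hsy : B.Adj s y) (hyt : y ≠ t) :
    ∃ p : B.Walk s t, p.IsPath ∧ s(s, t) ∉ p.edges ∧ s(s, y) ∈ p.edges := by
  obtain ⟨P, hP, hsP⟩ := exists_path_avoiding (hnocut s) hsy.ne' hb.ne'
  refine ⟨Walk.cons hsy P, (Walk.cons_isPath_iff _ _).mpr ⟨hP, hsP⟩, ?_, ?_⟩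
  · rw [Walk.edges_cons, List.mem_cons]
    rintro (hf | hf)
    · rw [Sym2.eq_iff] at hf
      rcases hf with ⟨-, rfl⟩ | ⟨rfl, rfl⟩
      · exact hyt rfl
      · exact hb.ne rfl
    · exact hsP (P.fst_mem_support_of_mem_edges hf)
  · simp

/-- Main induction: every edge `s(x,y) ≠ s(s,t)` lies on an `s`-`t` path avoiding
the edge `s(s,t)`. Induction on the distance from `x` to `t`. -/
lemma main [DecidableEq V] (hconn : B.Connected)
    (hnocut : ∀ v : V, (B.induce {x | x ≠ v}).Connected)
    {s t : V} (hb : B.Adj s t) :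
    ∀ n : ℕ, ∀ x y : V, B.Adj x y → s(x, y) ≠ s(s, t) → B.dist x t ≤ n →
      ∃ p : B.Walk s t, p.IsPath ∧ s(s, t) ∉ p.edges ∧ s(x, y) ∈ p.edges := by
  intro n
  induction n with
  | zero =>
    intro x y hxy hne hd
    have hxt : x = t := hconn.dist_eq_zero_iff.mp (Nat.le_zero.mp hd)
    subst hxt
    refine base_t hnocut hb hxy ?_
    rintro rfl
    exact hne (Sym2.eq_swap)
  | succ n ih =>
    intro x y hxy hne hd
    by_cases hxt : x = t
    · subst hxt
      refine base_t hnocut hb hxy ?_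
      rintro rfl
      exact hne (Sym2.eq_swap)
    by_cases hxs : x = s
    · subst hxs
      refine base_s hnocut hb hxy ?_
      rintro rfl
      exact hne rfl
    -- x ∉ {s, t}
    obtain ⟨pw, hpw⟩ := (hconn x t).exists_walk_length_eq_dist
    cases pw with
    | nil => exact absurd rfl hxt
    | @cons _ x' _ hxx' rest =>
      have hd' : B.dist x' t ≤ n := by
        have h1 : B.dist x' t ≤ rest.length := SimpleGraph.dist_le rest
        rw [Walk.length_cons] at hpw
        omega
      have hne' : s(x', x) ≠ s(s, t) := by
        intro heq
        rw [Sym2.eq_iff] at heq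
        rcases heq with ⟨rfl, rfl⟩ | ⟨rfl, rfl⟩
        · exact hxt rfl
        · exact hxs rfl
      obtain ⟨p0, hp0, hst0, hf0⟩ := ih x' x hxx'.symm hne' hd'
      have hx0 : x ∈ p0.support := p0.snd_mem_support_of_mem_edges hf0
      by_cases he0 : s(x, y) ∈ p0.edges
      · exact ⟨p0, hp0, hst0, he0⟩
      by_cases hy0 : y ∈ p0.support
      · -- chord case
        have hRpath : (Walk.cons hxy Walk.nil : B.Walk x y).IsPath := by simp [hxy.ne]
        obtain ⟨q, hq, hqsub, hqR⟩ := splice hp0 hx0 hy0 hxy.ne hRpath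
          (by intro v hv
              simp only [Walk.support_cons, Walk.support_nil, List.mem_cons,
                List.mem_singleton] at hv
              rcases hv with rfl | rfl | h'
              · exact Or.inl rfl
              · exact Or.inr (Or.inl rfl)
              · exact absurd h' List.not_mem_nil)
        refine ⟨q, hq, ?_, ?_⟩
        · intro hst
          rcases hqsub _ hst with hf | hf
          · exact hst0 hf
          · simp only [Walk.edges_cons, Walk.edges_nil, List.mem_singleton, List.mem_cons,
              List.not_mem_nil, or_false] at hf
            exact hne hf.symm
        · exact hqR _ (by simp)
      · -- attach case
        obtain ⟨W, hWpath, hxW⟩ := exists_path_avoiding (hnocut x) hxy.ne' (Ne.symm hxt)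
        obtain ⟨w, hwS, W', hprop, hWsub, hWesub⟩ :=
          exists_first_hit {v | v ∈ p0.support} W hy0 (p0.end_mem_support)
        set W'' := W'.bypass with hW''
        have hW''path : W''.IsPath := W'.bypass_isPath
        have hW''sup : ∀ v ∈ W''.support, v ∈ W'.support := fun v hv => W'.support_bypass_subset hv
        have hW''e : ∀ f ∈ W''.edges, f ∈ W'.edges := fun f hf => W'.edges_bypass_subset hf
        have hxW'' : x ∉ W''.support := fun hv => hxW (hWsub (hW''sup x hv))
        have hxw : x ≠ w := fun h => hxW'' (h ▸ W''.end_mem_support)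
        have hRpath : (Walk.cons hxy W'').IsPath := (Walk.cons_isPath_iff _ _).mpr ⟨hW''path, hxW''⟩
        obtain ⟨q, hq, hqsub, hqR⟩ := splice hp0 hx0 hwS hxw hRpath
          (by intro v hv
              rw [Walk.support_cons, List.mem_cons] at hv
              rcases hv with rfl | hv
              · exact Or.inl rfl
              · exact Or.inr (hprop v (hW''sup v hv)))
        refine ⟨q, hq, ?_, ?_⟩
        · intro hst
          rcases hqsub _ hst with hf | hf
          · exact hst0 hf
          · rw [Walk.edges_cons, List.mem_cons] at hf
            rcases hf with hf | hf
            · exact hne hf.symm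
            · have hsW : s ∈ W''.support := W''.fst_mem_support_of_mem_edges hf
              have htW : t ∈ W''.support := W''.snd_mem_support_of_mem_edges hf
              have hs' := hprop s (hW''sup s hsW)
              have ht' := hprop t (hW''sup t htW)
              rcases hs' with rfl | hs'
              · rcases ht' with h | ht'
                · exact hb.ne h.symm
                · exact ht' p0.end_mem_support
              · exact hs' p0.start_mem_support
        · exact hqR _ (by rw [Walk.edges_cons]; exact List.mem_cons_self)

end TwoConnAux

open TwoConnAux in
/-- In a biconnected (2-connected) finite simple graph `B` with an edge
`b = {s,t}`, every edge `e ≠ b` lies on a simple cycle together with `b`; equivalently,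
`e` lies on some simple `st`-path of the graph `B − b`. -/
theorem exists_cycle_through_two_edges
    {V : Type*} [Fintype V] (B : SimpleGraph V)
    (hconn : B.Connected) (hcard : 3 ≤ Fintype.card V)
    (hnocut : ∀ v : V, (B.induce {x | x ≠ v}).Connected)
    {s t : V} (hb : B.Adj s t) {e : Sym2 V} (he : e ∈ B.edgeSet) (hne : e ≠ s(s,t)) :
    (∃ (u : V) (c : B.Walk u u), c.IsCycle ∧ s(s,t) ∈ c.edges ∧ e ∈ c.edges) ∧
    (∃ p : (B.deleteEdges {s(s,t)}).Walk s t, p.IsPath ∧ e ∈ p.edges) := by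
  classical
  induction e using Sym2.ind with
  | _ x y =>
    rw [SimpleGraph.mem_edgeSet] at he
    obtain ⟨p, hp, hst, hxy⟩ := main hconn hnocut hb (B.dist x t) x y he hne le_rfl
    constructor
    · refine ⟨t, Walk.cons hb.symm p, ?_, ?_, ?_⟩
      · exact (Walk.cons_isCycle_iff p hb.symm).mpr ⟨hp, by rwa [Sym2.eq_swap]⟩
      · rw [Walk.edges_cons]
        exact List.mem_cons.mpr (Or.inl Sym2.eq_swap.symm)
      · rw [Walk.edges_cons]
        exact List.mem_cons.mpr (Or.inr hxy)
    · have hsub : ∀ f ∈ p.edges, f ∈ (B.deleteEdges {s(s,t)}).edgeSet := by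
        intro f hf
        rw [SimpleGraph.edgeSet_deleteEdges]
        refine ⟨p.edges_subset_edgeSet hf, ?_⟩
        simp only [Set.mem_singleton_iff]
        rintro rfl
        exact hst hf
      refine ⟨p.transfer _ hsub, hp.transfer hsub, ?_⟩
      rw [Walk.edges_transfer]
      exact hxy
end

section
/- Let G be a finite simple undirected graph, let π be a simple path from s to t in G, and let w be a vertex lying on π. Then for every vertex a with a ≠ w, the vertex w lies in the same connected component of G − a as s, or in the same connected component of G − a as t (or both). -/
open SimpleGraph

private lemma reach_of_avoid {V : Type*} {G : SimpleGraph V} {u v a : V}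
    (q : G.Walk u v) (ha : a ∉ q.support) (hu : u ≠ a) (hv : v ≠ a) :
    (G.induce {x | x ≠ a}).Reachable ⟨u, hu⟩ ⟨v, hv⟩ := by
  have hsub : {x | x ∈ q.support} ⊆ {x : V | x ≠ a} := by
    intro x hx hxa; exact ha (hxa ▸ hx)
  have h := (q.connected_induce_support ⟨u, q.start_mem_support⟩ ⟨v, q.end_mem_support⟩)
  exact h.map (SimpleGraph.induceHomOfLE G hsub).toHom

/-- Let `π` be a simple path from `s` to `t` in a finite simple graph
`G` and let `w` be a vertex lying on `π`. Then for every vertex `a ≠ w`, the vertex `w`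
lies in the same connected component of `G − a` as `s`, or in the same connected
component of `G − a` as `t` (or both). -/
theorem vertex_on_path_reaches_endpoint_avoiding_vertex
    {V : Type*} [Fintype V] (G : SimpleGraph V) {s t : V}
    (p : G.Walk s t) (hp : p.IsPath) {w : V} (hw : w ∈ p.support) :
    ∀ (a : V) (haw : a ≠ w),
      (∃ hs : s ≠ a, (G.induce {x | x ≠ a}).Reachable ⟨w, haw.symm⟩ ⟨s, hs⟩) ∨
      (∃ ht : t ≠ a, (G.induce {x | x ≠ a}).Reachable ⟨w, haw.symm⟩ ⟨t, ht⟩) := by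
  classical
  intro a haw
  set q := p.takeUntil w hw with hq
  set r := p.dropUntil w hw with hr
  have hspec : q.append r = p := p.take_spec hw
  have hnodup : p.support.Nodup := hp.support_nodup
  have hnot : a ∉ q.support ∨ a ∉ r.support := by
    by_contra hc
    push_neg at hc
    obtain ⟨h1, h2⟩ := hc
    have h2' : a ∈ r.support.tail := by
      have hcons := r.support_eq_cons
      rw [hcons] at h2
      rcases List.mem_cons.mp h2 with h | h
      · exact absurd h haw
      · rw [hcons]; exact h
    have : ¬ (q.support ++ r.support.tail).Nodup := by
      rw [List.nodup_append]
      intro ⟨_, _, hd⟩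
      exact hd a h1 a h2' rfl
    rw [← SimpleGraph.Walk.support_append, hspec] at this
    exact this hnodup
  rcases hnot with h | h
  · left
    have hs : s ≠ a := fun he => h (he ▸ q.start_mem_support)
    exact ⟨hs, (reach_of_avoid q h hs haw.symm).symm⟩
  · right
    have ht : t ≠ a := fun he => h (he ▸ r.end_mem_support)
    exact ⟨ht, reach_of_avoid r h haw.symm ht⟩
end
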